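/- arXiv:2605.25608 — 2 statements merged into one kernel-verified Lean document; each statement's English description precedes it below -/
import Mathlib

section
/- Every function in the class NN(W, D, K) can be realized by ReLU network parameters θ = ((A_ℓ, b_ℓ)_{ℓ=0}^{D−1}, A_D) of depth D and layer widths at most W such that ‖A_D‖_F ≤ K and √(‖A_ℓ‖_F² + ‖b_ℓ‖_2²) ≤ 1 for every ℓ = 0, …, D−1, without changing the realized function. -/
open scoped BigOperators

noncomputable section

/-- ReLU activation. -/
def relu (t : ℝ) : ℝ := max 0 t

/-- Squared Frobenius norm of a matrix. -/
def frobSq {m n : ℕ} (A : Matrix (Fin m) (Fin n) ℝ) : ℝ := ∑ i, ∑ j, (A i j) ^ 2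

/-- Frobenius norm of a matrix. -/
def frob {m n : ℕ} (A : Matrix (Fin m) (Fin n) ℝ) : ℝ := Real.sqrt (frobSq A)

/-- Squared Euclidean norm of a vector. -/
def sqNorm {n : ℕ} (v : Fin n → ℝ) : ℝ := ∑ i, (v i) ^ 2

/-- A ReLU network of depth `D`, input dimension `d` and output dimension `k`:
layer widths `N 0 = d, N 1, …, N D, N (D+1) = k`, weight matrices `A ℓ` and biases `b ℓ`. -/
structure ReluNetwork (D d k : ℕ) where
  N : ℕ → ℕ
  hN0 : N 0 = d
  hNlast : N (D + 1) = k
  A : (ℓ : ℕ) → Matrix (Fin (N (ℓ + 1))) (Fin (N ℓ)) ℝ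
  b : (ℓ : ℕ) → Fin (N (ℓ + 1)) → ℝ

namespace ReluNetwork

variable {D d k : ℕ}

/-- Output of the `ℓ`-th hidden layer (after the ReLU). -/
def layer (net : ReluNetwork D d k) : (ℓ : ℕ) → (Fin d → ℝ) → Fin (net.N ℓ) → ℝ
  | 0 => fun x i => x (Fin.cast net.hN0 i)
  | (ℓ + 1) => fun x i =>
      relu ((∑ j, net.A ℓ i j * net.layer ℓ x j) + net.b ℓ i)

/-- The function realized by the network:
`f_θ(x) = A_D σ(A_{D-1} σ( ⋯ σ(A_0 x + b_0) ⋯ ) + b_{D-1})`. -/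
def realize (net : ReluNetwork D d k) (x : Fin d → ℝ) : Fin k → ℝ :=
  fun i => ∑ j, net.A D (Fin.cast net.hNlast.symm i) j * net.layer D x j

/-- Multiplicative Frobenius norm constraint
`κ(θ) = ‖A_D‖_F ∏_{ℓ<D} √(‖A_ℓ‖_F² + ‖b_ℓ‖² + 1)`. -/
def kappa (net : ReluNetwork D d k) : ℝ :=
  frob (net.A D) *
    ∏ ℓ ∈ Finset.range D, Real.sqrt (frobSq (net.A ℓ) + sqNorm (net.b ℓ) + 1)

/-- All (hidden) layer widths are at most `W`. -/
def widthLe (net : ReluNetwork D d k) (W : ℕ) : Prop :=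
  ∀ ℓ, 0 < ℓ → ℓ ≤ D → net.N ℓ ≤ W

end ReluNetwork

/-- The norm-constrained class `NN(W, D, K)` of functions `ℝ^d → ℝ^k` realized by depth-`D`
ReLU networks with all layer widths at most `W` and `κ(θ) ≤ K`. -/
def NNclass (d k W D : ℕ) (K : ℝ) : Set ((Fin d → ℝ) → Fin k → ℝ) :=
  {f | ∃ net : ReluNetwork D d k, net.widthLe W ∧ net.kappa ≤ K ∧ net.realize = f}


-- Auxiliary lemmas for the rescaling argument.
lemma frobSq_nonneg {m n : ℕ} (A : Matrix (Fin m) (Fin n) ℝ) : 0 ≤ frobSq A :=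
  Finset.sum_nonneg fun _ _ => Finset.sum_nonneg fun _ _ => sq_nonneg _

lemma sqNorm_nonneg {n : ℕ} (v : Fin n → ℝ) : 0 ≤ sqNorm v :=
  Finset.sum_nonneg fun _ _ => sq_nonneg _

lemma frobSq_smul {m n : ℕ} (a : ℝ) (A : Matrix (Fin m) (Fin n) ℝ) :
    frobSq (a • A) = a ^ 2 * frobSq A := by
  simp [frobSq, Matrix.smul_apply, mul_pow, Finset.mul_sum]

lemma sqNorm_smul {n : ℕ} (a : ℝ) (v : Fin n → ℝ) :
    sqNorm (a • v) = a ^ 2 * sqNorm v := by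
  simp [sqNorm, Pi.smul_apply, mul_pow, Finset.mul_sum]

lemma frob_smul {m n : ℕ} (a : ℝ) (A : Matrix (Fin m) (Fin n) ℝ) :
    frob (a • A) = |a| * frob A := by
  rw [frob, frobSq_smul, Real.sqrt_mul (sq_nonneg a), Real.sqrt_sq_eq_abs, frob]

lemma relu_mul (a t : ℝ) (ha : 0 ≤ a) : relu (a * t) = a * relu t := by
  unfold relu
  rw [mul_max_of_nonneg _ _ ha, mul_zero]

namespace ReluNetwork

variable {D d k : ℕ}

/-- The scaling constant of layer `ℓ`. -/
def cconst (net : ReluNetwork D d k) (ℓ : ℕ) : ℝ :=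
  Real.sqrt (frobSq (net.A ℓ) + sqNorm (net.b ℓ) + 1)

lemma one_le_cconst (net : ReluNetwork D d k) (ℓ : ℕ) : 1 ≤ net.cconst ℓ := by
  have h1 : (1:ℝ) ≤ frobSq (net.A ℓ) + sqNorm (net.b ℓ) + 1 := by
    have := frobSq_nonneg (net.A ℓ); have := sqNorm_nonneg (net.b ℓ); linarith
  calc (1:ℝ) = Real.sqrt 1 := Real.sqrt_one.symm
  _ ≤ _ := Real.sqrt_le_sqrt h1

lemma cconst_pos (net : ReluNetwork D d k) (ℓ : ℕ) : 0 < net.cconst ℓ :=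
  lt_of_lt_of_le one_pos (net.one_le_cconst ℓ)

/-- Product of the scaling constants of the first `ℓ` layers. -/
def Pprod (net : ReluNetwork D d k) (ℓ : ℕ) : ℝ :=
  ∏ j ∈ Finset.range ℓ, net.cconst j

lemma one_le_Pprod (net : ReluNetwork D d k) (ℓ : ℕ) : 1 ≤ net.Pprod ℓ := by
  have h : ∀ j ∈ Finset.range ℓ, (1:ℝ) ≤ net.cconst j := fun j _ => net.one_le_cconst j
  calc (1:ℝ) = ∏ _j ∈ Finset.range ℓ, (1:ℝ) := by simp
  _ ≤ _ := Finset.prod_le_prod (by intro i _; norm_num) h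

lemma Pprod_pos (net : ReluNetwork D d k) (ℓ : ℕ) : 0 < net.Pprod ℓ :=
  lt_of_lt_of_le one_pos (net.one_le_Pprod ℓ)

/-- The rescaled network: hidden weights divided by their scaling constants, biases divided by
the cumulative product, and the cumulative product pushed into the output layer. -/
def rescaled (net : ReluNetwork D d k) : ReluNetwork D d k where
  N := net.N
  hN0 := net.hN0
  hNlast := net.hNlast
  A := fun ℓ => if ℓ = D then net.Pprod D • net.A ℓ else (net.cconst ℓ)⁻¹ • net.A ℓ
  b := fun ℓ => (net.Pprod (ℓ + 1))⁻¹ • net.b ℓ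

lemma layer_rescaled (net : ReluNetwork D d k) :
    ∀ ℓ, ℓ ≤ D → ∀ x i, net.rescaled.layer ℓ x i = (net.Pprod ℓ)⁻¹ * net.layer ℓ x i := by
  intro ℓ
  induction ℓ with
  | zero => intro _ x i; simp [layer, Pprod, rescaled]
  | succ ℓ ih =>
    intro hℓ x i
    have hne : ℓ ≠ D := by omega
    have hrec := ih (by omega) x
    have hPsucc : net.Pprod (ℓ + 1) = net.Pprod ℓ * net.cconst ℓ :=
      Finset.prod_range_succ _ _
    have hc : (0:ℝ) < net.cconst ℓ := net.cconst_pos ℓ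
    have hP : (0:ℝ) < net.Pprod ℓ := net.Pprod_pos ℓ
    show relu ((∑ j, net.rescaled.A ℓ i j * net.rescaled.layer ℓ x j)
        + net.rescaled.b ℓ i) = _
    have hA : net.rescaled.A ℓ = (net.cconst ℓ)⁻¹ • net.A ℓ := by
      simp [rescaled, hne]
    have hb : net.rescaled.b ℓ = (net.Pprod (ℓ + 1))⁻¹ • net.b ℓ := rfl
    have key : (∑ j, net.rescaled.A ℓ i j * net.rescaled.layer ℓ x j)
        + net.rescaled.b ℓ i
        = (net.Pprod (ℓ + 1))⁻¹ *
          ((∑ j, net.A ℓ i j * net.layer ℓ x j) + net.b ℓ i) := by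
      rw [hA, hb, mul_add, Finset.mul_sum]
      congr 1
      apply Finset.sum_congr rfl
      intro j _
      rw [hrec j]
      show (net.cconst ℓ)⁻¹ * net.A ℓ i j * ((net.Pprod ℓ)⁻¹ * net.layer ℓ x j) = (net.Pprod (ℓ + 1))⁻¹ * (net.A ℓ i j * net.layer ℓ x j)
      rw [hPsucc, mul_inv]
      ring
    rw [key, relu_mul _ _ (le_of_lt (inv_pos.mpr (net.Pprod_pos (ℓ + 1))))]
    rfl

lemma realize_rescaled (net : ReluNetwork D d k) :
    net.rescaled.realize = net.realize := by
  funext x i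
  have hA : net.rescaled.A D = net.Pprod D • net.A D := by simp [rescaled]
  have hP : net.Pprod D ≠ 0 := ne_of_gt (net.Pprod_pos D)
  unfold realize
  apply Finset.sum_congr rfl
  intro j _
  rw [net.layer_rescaled D le_rfl x j, hA]
  show net.Pprod D * net.A D (Fin.cast net.hNlast.symm i) j * ((net.Pprod D)⁻¹ * net.layer D x j) = net.A D (Fin.cast net.hNlast.symm i) j * net.layer D x j
  field_simp

end ReluNetwork

/-- **Rescaling.** Every function in `NN(W, D, K)` can be realized by network
parameters of depth `D` and layer widths at most `W` such that `‖A_D‖_F ≤ K` and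
`√(‖A_ℓ‖_F² + ‖b_ℓ‖₂²) ≤ 1` for every `ℓ = 0, …, D−1`, without changing the realized
function. -/
theorem rescaling_frobenius (d k W D : ℕ) (K : ℝ)
    (f : (Fin d → ℝ) → Fin k → ℝ) (hf : f ∈ NNclass d k W D K) :
    ∃ net : ReluNetwork D d k,
      net.widthLe W ∧
      net.realize = f ∧
      frob (net.A D) ≤ K ∧
      ∀ ℓ < D, Real.sqrt (frobSq (net.A ℓ) + sqNorm (net.b ℓ)) ≤ 1 := by
  obtain ⟨net, hW, hK, hreal⟩ := hf
  refine ⟨net.rescaled, ?_, ?_, ?_, ?_⟩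
  · intro ℓ h1 h2
    exact hW ℓ h1 h2
  · rw [net.realize_rescaled]; exact hreal
  · have hA : net.rescaled.A D = net.Pprod D • net.A D := by
      simp [ReluNetwork.rescaled]
    have hPnn : (0:ℝ) ≤ net.Pprod D := le_of_lt (net.Pprod_pos D)
    have h2 : frob (net.rescaled.A D) = frob (net.Pprod D • net.A D) := congrArg frob hA
    rw [h2]
    rw [frob_smul, abs_of_nonneg hPnn]
    calc net.Pprod D * frob (net.A D) = net.kappa := by
          rw [ReluNetwork.kappa, mul_comm]; rfl
    _ ≤ K := hK
  · intro ℓ hℓ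
    have hne : ℓ ≠ D := by omega
    have hA : net.rescaled.A ℓ = (net.cconst ℓ)⁻¹ • net.A ℓ := by
      simp [ReluNetwork.rescaled, hne]
    have hb : net.rescaled.b ℓ = (net.Pprod (ℓ + 1))⁻¹ • net.b ℓ := rfl
    have hc : (0:ℝ) < net.cconst ℓ := net.cconst_pos ℓ
    have hnn : (0:ℝ) ≤ frobSq (net.A ℓ) + sqNorm (net.b ℓ) + 1 := by
      have := frobSq_nonneg (net.A ℓ); have := sqNorm_nonneg (net.b ℓ); linarith
    have hc2 : net.cconst ℓ ^ 2 = frobSq (net.A ℓ) + sqNorm (net.b ℓ) + 1 :=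
      Real.sq_sqrt hnn
    have hcP : net.cconst ℓ ≤ net.Pprod (ℓ + 1) := by
      have hPsucc : net.Pprod (ℓ + 1) = net.Pprod ℓ * net.cconst ℓ :=
        Finset.prod_range_succ _ _
      have h1 := net.one_le_Pprod ℓ
      nlinarith
    have hinv : (net.Pprod (ℓ + 1))⁻¹ ≤ (net.cconst ℓ)⁻¹ :=
      (inv_le_inv₀ (lt_of_lt_of_le hc hcP) hc).mpr hcP
    have hinvnn : (0:ℝ) ≤ (net.Pprod (ℓ + 1))⁻¹ :=
      le_of_lt (inv_pos.mpr (net.Pprod_pos (ℓ + 1)))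
    have h2 : frobSq (net.rescaled.A ℓ) = frobSq ((net.cconst ℓ)⁻¹ • net.A ℓ) := congrArg frobSq hA
    have h3 : sqNorm (net.rescaled.b ℓ) = sqNorm ((net.Pprod (ℓ + 1))⁻¹ • net.b ℓ) := congrArg sqNorm hb
    rw [h2, h3]
    rw [frobSq_smul, sqNorm_smul]
    have harg : ((net.cconst ℓ)⁻¹) ^ 2 * frobSq (net.A ℓ)
        + ((net.Pprod (ℓ + 1))⁻¹) ^ 2 * sqNorm (net.b ℓ) ≤ 1 := by
      have e1 : ((net.Pprod (ℓ + 1))⁻¹) ^ 2 * sqNorm (net.b ℓ)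
          ≤ ((net.cconst ℓ)⁻¹) ^ 2 * sqNorm (net.b ℓ) := by
        apply mul_le_mul_of_nonneg_right _ (sqNorm_nonneg _)
        exact pow_le_pow_left₀ hinvnn hinv 2
      have e2 : ((net.cconst ℓ)⁻¹) ^ 2 * frobSq (net.A ℓ)
          + ((net.cconst ℓ)⁻¹) ^ 2 * sqNorm (net.b ℓ)
          = (net.cconst ℓ ^ 2)⁻¹ * (frobSq (net.A ℓ) + sqNorm (net.b ℓ)) := by
        rw [← inv_pow]; ring
      have e3 : frobSq (net.A ℓ) + sqNorm (net.b ℓ) ≤ net.cconst ℓ ^ 2 := by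
        linarith
      calc ((net.cconst ℓ)⁻¹) ^ 2 * frobSq (net.A ℓ)
          + ((net.Pprod (ℓ + 1))⁻¹) ^ 2 * sqNorm (net.b ℓ)
          ≤ ((net.cconst ℓ)⁻¹) ^ 2 * frobSq (net.A ℓ)
            + ((net.cconst ℓ)⁻¹) ^ 2 * sqNorm (net.b ℓ) := by linarith
      _ = (net.cconst ℓ ^ 2)⁻¹ * (frobSq (net.A ℓ) + sqNorm (net.b ℓ)) := e2
      _ ≤ (net.cconst ℓ ^ 2)⁻¹ * (net.cconst ℓ ^ 2) := by
          apply mul_le_mul_of_nonneg_left e3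
          positivity
      _ = 1 := inv_mul_cancel₀ (by positivity)
    calc Real.sqrt _ ≤ Real.sqrt 1 := Real.sqrt_le_sqrt harg
    _ = 1 := Real.sqrt_one
end
end

section
/- For every k ∈ ℕ with k ≥ 1, the function φ_k(x) = (1/k) ∑_{i=1}^k 2σ(x − (2i−1)/(2k)) satisfies: φ_k(x) = 0 for all x ≤ 0; φ_k(x) ∈ [0,1] for all x ∈ [0,1]; and |x² − φ_k(x)| ≤ 1/(2k²) for all x ∈ [0,1]. -/
open scoped BigOperators

noncomputable section

/-- `φ_k(x) = (1/k) ∑_{i=1}^k 2 σ(x − (2i−1)/(2k))`, the midpoint Riemann-sum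
approximation of `x² = ∫_0^1 2 σ(x − b) db`, where `σ(t) = max 0 t` is the ReLU. -/
def phiK (k : ℕ) (x : ℝ) : ℝ :=
  (1 / (k : ℝ)) * ∑ i ∈ Finset.Icc 1 k, 2 * max 0 (x - (2 * (i : ℝ) - 1) / (2 * (k : ℝ)))

lemma sum_odd (m : ℕ) : ∑ i ∈ Finset.Icc 1 m, (2 * (i : ℝ) - 1) = (m : ℝ) ^ 2 := by
  induction m with
  | zero => simp
  | succ n ih =>
    rw [Finset.sum_Icc_succ_top (by omega : 1 ≤ n + 1), ih]
    push_cast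
    ring

/-- Closed form for `phiK` on `[0,1]`. -/
lemma phiK_eq (k : ℕ) (hk : 1 ≤ k) (x : ℝ) (hx0 : 0 ≤ x) (hx1 : x ≤ 1) :
    phiK k x = x ^ 2 - ((k : ℝ) * x - (⌊(k : ℝ) * x + 1/2⌋₊ : ℝ)) ^ 2 / (k : ℝ) ^ 2 := by
  have hkpos : (0 : ℝ) < k := by exact_mod_cast hk
  set m : ℕ := ⌊(k : ℝ) * x + 1/2⌋₊ with hm
  have hy0 : (0 : ℝ) ≤ (k : ℝ) * x + 1/2 := by positivity
  have hmle : (m : ℝ) ≤ (k : ℝ) * x + 1/2 := Nat.floor_le hy0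
  have hmgt : (k : ℝ) * x + 1/2 < (m : ℝ) + 1 := Nat.lt_floor_add_one _
  have hmk : m ≤ k := by
    have : (k : ℝ) * x + 1/2 < (k : ℝ) + 1 := by nlinarith
    have := Nat.floor_lt hy0 |>.mpr (by exact_mod_cast this)
    omega
  have hsplit : Finset.Icc 1 k = Finset.Ioc 0 k := (Finset.Icc_add_one_left_eq_Ioc 0 k)
  rw [phiK, hsplit, ← Finset.sum_Ioc_consecutive _ (Nat.zero_le m) hmk]
  have h2 : ∑ i ∈ Finset.Ioc m k, 2 * max 0 (x - (2 * (i : ℝ) - 1) / (2 * (k : ℝ))) = 0 := by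
    apply Finset.sum_eq_zero
    intro i hi
    rw [Finset.mem_Ioc] at hi
    have hi1 : (m : ℝ) + 1 ≤ (i : ℝ) := by exact_mod_cast hi.1
    have : x - (2 * (i : ℝ) - 1) / (2 * (k : ℝ)) < 0 := by
      rw [sub_neg, lt_div_iff₀ (by positivity)]
      nlinarith
    rw [max_eq_left this.le, mul_zero]
  have h1 : ∑ i ∈ Finset.Ioc 0 m, 2 * max 0 (x - (2 * (i : ℝ) - 1) / (2 * (k : ℝ)))
      = 2 * (m : ℝ) * x - (m : ℝ) ^ 2 / (k : ℝ) := by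
    rw [← Finset.Icc_add_one_left_eq_Ioc, zero_add]
    have heq : ∀ i ∈ Finset.Icc 1 m,
        2 * max 0 (x - (2 * (i : ℝ) - 1) / (2 * (k : ℝ)))
        = 2 * x - (2 * (i : ℝ) - 1) / (k : ℝ) := by
      intro i hi
      rw [Finset.mem_Icc] at hi
      have hile : (i : ℝ) ≤ (m : ℝ) := by exact_mod_cast hi.2
      have hpos : 0 ≤ x - (2 * (i : ℝ) - 1) / (2 * (k : ℝ)) := by
        rw [sub_nonneg, div_le_iff₀ (by positivity)]
        nlinarith
      rw [max_eq_right hpos]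
      field_simp
    rw [Finset.sum_congr rfl heq, Finset.sum_sub_distrib, Finset.sum_const,
      Nat.card_Icc, ← Finset.sum_div, sum_odd]
    simp only [Nat.add_sub_cancel, nsmul_eq_mul]
    ring
  rw [h1, h2, add_zero]
  field_simp
  ring

/-- For every `k ≥ 1`: `φ_k(x) = 0` for `x ≤ 0`; `φ_k(x) ∈ [0,1]` for
`x ∈ [0,1]`; and `|x² − φ_k(x)| ≤ 1/(2k²)` for `x ∈ [0,1]`. -/
theorem phiK_properties (k : ℕ) (hk : 1 ≤ k) :
    (∀ x : ℝ, x ≤ 0 → phiK k x = 0) ∧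
    (∀ x ∈ Set.Icc (0 : ℝ) 1, phiK k x ∈ Set.Icc (0 : ℝ) 1) ∧
    (∀ x ∈ Set.Icc (0 : ℝ) 1, |x ^ 2 - phiK k x| ≤ 1 / (2 * (k : ℝ) ^ 2)) := by
  have hkpos : (0 : ℝ) < k := by exact_mod_cast hk
  have key : ∀ x ∈ Set.Icc (0 : ℝ) 1,
      ∃ e : ℝ, 0 ≤ e ∧ e ≤ 1 / (2 * (k : ℝ) ^ 2) ∧ phiK k x = x ^ 2 - e := by
    intro x hx
    obtain ⟨hx0, hx1⟩ := hx
    refine ⟨((k : ℝ) * x - (⌊(k : ℝ) * x + 1/2⌋₊ : ℝ)) ^ 2 / (k : ℝ) ^ 2, by positivity,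
      ?_, phiK_eq k hk x hx0 hx1⟩
    have hy0 : (0 : ℝ) ≤ (k : ℝ) * x + 1/2 := by positivity
    have hmle : ((⌊(k : ℝ) * x + 1/2⌋₊ : ℕ) : ℝ) ≤ (k : ℝ) * x + 1/2 := Nat.floor_le hy0
    have hmgt : (k : ℝ) * x + 1/2 < ((⌊(k : ℝ) * x + 1/2⌋₊ : ℕ) : ℝ) + 1 :=
      Nat.lt_floor_add_one _
    rw [div_le_div_iff₀ (by positivity) (by positivity)]
    obtain ⟨d, hd⟩ : ∃ d : ℝ, d = (k : ℝ) * x - (⌊(k : ℝ) * x + 1/2⌋₊ : ℝ) := ⟨_, rfl⟩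
    rw [← hd]
    have h1 : d ≤ 1/2 := by rw [hd]; linarith
    have h2 : (0:ℝ) ≤ 1/2 + d := by rw [hd]; linarith
    have h3 : (0:ℝ) ≤ (1/2 - d) * (1/2 + d) := mul_nonneg (by linarith) h2
    have h4 : (0:ℝ) ≤ 1/4 - d^2 := by nlinarith
    nlinarith [mul_nonneg h4 (sq_nonneg ((k:ℝ))), mul_pos hkpos hkpos]
  refine ⟨?_, ?_, ?_⟩
  · intro x hx
    rw [phiK]
    have : ∑ i ∈ Finset.Icc 1 k, 2 * max 0 (x - (2 * (i : ℝ) - 1) / (2 * (k : ℝ))) = 0 := by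
      apply Finset.sum_eq_zero
      intro i hi
      rw [Finset.mem_Icc] at hi
      have hi1 : (1 : ℝ) ≤ (i : ℝ) := by exact_mod_cast hi.1
      have : x - (2 * (i : ℝ) - 1) / (2 * (k : ℝ)) ≤ 0 := by
        have : (0:ℝ) ≤ (2 * (i : ℝ) - 1) / (2 * (k : ℝ)) := by
          apply div_nonneg (by nlinarith) (by positivity)
        linarith
      rw [max_eq_left this, mul_zero]
    rw [this, mul_zero]
  · intro x hx
    obtain ⟨e, he0, _, heq⟩ := key x hx
    obtain ⟨hx0, hx1⟩ := hx
    constructor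
    · rw [phiK]
      apply mul_nonneg (by positivity)
      apply Finset.sum_nonneg
      intro i _
      positivity
    · rw [heq]; nlinarith
  · intro x hx
    obtain ⟨e, he0, he1, heq⟩ := key x hx
    rw [heq, abs_of_nonneg (by linarith)]
    linarith
end
end
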